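/- An entanglement-breaking (measure-and-prepare) channel C(ρ) = ∑_j Tr[M_j ρ] σ_j on M_d(ℂ) with d ≥ 2, where (M_j) is a POVM and each σ_j a density matrix, cannot satisfy D ∘ C = id for any quantum channel D; i.e. entanglement-breaking channels on systems of dimension at least 2 are not left-invertible by a channel. -/

import Mathlib

open Matrix BigOperators
open scoped ComplexOrder Kronecker

/-- A quantum channel on `M_d(ℂ)`: a completely positive trace-preserving map,
given by a finite Kraus family with `∑ Kᴴ K = 1`. -/
def IsChannel {d : ℕ} (Φ : Matrix (Fin d) (Fin d) ℂ → Matrix (Fin d) (Fin d) ℂ) : Prop :=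
  ∃ (m : ℕ) (K : Fin m → Matrix (Fin d) (Fin d) ℂ),
    (∑ k, (K k)ᴴ * K k = 1) ∧ ∀ ρ, Φ ρ = ∑ k, K k * ρ * (K k)ᴴ

lemma kron_conjTranspose {l n l' n' : Type*} (A : Matrix l n ℂ) (B : Matrix l' n' ℂ) :
    (A ⊗ₖ B)ᴴ = Aᴴ ⊗ₖ Bᴴ := by
  ext p q
  simp [conjTranspose_apply]

lemma kron_posSemidef {n n' : Type*} [Fintype n] [Fintype n'] [DecidableEq n] [DecidableEq n']
    {A : Matrix n n ℂ} {B : Matrix n' n' ℂ} (hA : A.PosSemidef) (hB : B.PosSemidef) :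
    (A ⊗ₖ B).PosSemidef := by
  exact hA.kronecker hB

lemma sum_posSemidef {k : ℕ} {n : Type*} [Fintype n]
    (A : Fin k → Matrix n n ℂ) (h : ∀ j, (A j).PosSemidef) :
    (∑ j, A j).PosSemidef := by
  classical
  refine Finset.sum_induction A Matrix.PosSemidef
    (fun a b ha hb => ha.add hb) Matrix.PosSemidef.zero (fun j _ => h j)

lemma kron_sum_right {l n : Type*} [Fintype n] {k : ℕ} (A : Matrix l l ℂ)
    (X : Fin k → Matrix n n ℂ) :
    A ⊗ₖ (∑ i, X i) = ∑ i, A ⊗ₖ X i := by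
  ext p q
  simp [Matrix.sum_apply, Finset.mul_sum]

/-- An entanglement-breaking (measure-and-prepare) channel
`C(ρ) = ∑ⱼ Tr[Mⱼ ρ] σⱼ` on `M_d(ℂ)` with `d ≥ 2` admits no quantum channel `D`
with `D ∘ C = id`. -/
theorem entanglement_breaking_not_left_invertible {d m : ℕ} (hd : 2 ≤ d)
    (M : Fin m → Matrix (Fin d) (Fin d) ℂ)
    (σ : Fin m → Matrix (Fin d) (Fin d) ℂ)
    (hM : ∀ j, (M j).PosSemidef) (hMsum : ∑ j, M j = 1)
    (hσpsd : ∀ j, (σ j).PosSemidef) (hσtr : ∀ j, (σ j).trace = 1) :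
    ¬ ∃ D : Matrix (Fin d) (Fin d) ℂ → Matrix (Fin d) (Fin d) ℂ,
        IsChannel D ∧
        ∀ ρ : Matrix (Fin d) (Fin d) ℂ,
          D (∑ j, (M j * ρ).trace • σ j) = ρ := by
  rintro ⟨D, ⟨mK, K, hK1, hKraus⟩, hinv⟩
  classical
  set ι : Fin 2 → Fin d := Fin.castLE hd with hιdef
  have hι : Function.Injective ι := Fin.castLE_injective hd
  -- the entanglement-breaking block matrix
  set B : Matrix (Fin 2 × Fin d) (Fin 2 × Fin d) ℂ :=
    ∑ j, ((M j).submatrix ι ι) ⊗ₖ (σ j) with hBdef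
  have hBpsd : B.PosSemidef :=
    sum_posSemidef _ (fun j => kron_posSemidef ((hM j).submatrix ι) (hσpsd j))
  -- apply D blockwise
  set Y : Matrix (Fin 2 × Fin d) (Fin 2 × Fin d) ℂ :=
    ∑ n, ((1 : Matrix (Fin 2) (Fin 2) ℂ) ⊗ₖ K n) * B *
      ((1 : Matrix (Fin 2) (Fin 2) ℂ) ⊗ₖ K n)ᴴ with hYdef
  have hYpsd : Y.PosSemidef :=
    sum_posSemidef _ (fun n => hBpsd.mul_mul_conjTranspose_same _)
  -- Y as a sum of Kronecker products
  have hY2 : Y = ∑ j, ((M j).submatrix ι ι) ⊗ₖ (D (σ j)) := by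
    rw [hYdef]
    have h1 : ∀ n : Fin mK,
        ((1 : Matrix (Fin 2) (Fin 2) ℂ) ⊗ₖ K n) * B *
          ((1 : Matrix (Fin 2) (Fin 2) ℂ) ⊗ₖ K n)ᴴ
        = ∑ j, ((M j).submatrix ι ι) ⊗ₖ (K n * σ j * (K n)ᴴ) := by
      intro n
      rw [hBdef, Finset.mul_sum, Finset.sum_mul]
      refine Finset.sum_congr rfl fun j _ => ?_
      rw [kron_conjTranspose, conjTranspose_one, ← Matrix.mul_kronecker_mul,
        ← Matrix.mul_kronecker_mul, one_mul, mul_one]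
    rw [Finset.sum_congr rfl fun n _ => h1 n, Finset.sum_comm]
    refine Finset.sum_congr rfl fun j _ => ?_
    rw [← kron_sum_right, hKraus]
  -- trace of M j against a standard basis matrix
  have htr : ∀ (j : Fin m) (a b : Fin d),
      (M j * Matrix.single a b (1 : ℂ)).trace = (M j) b a := by
    intro j a b
    rw [Matrix.trace_mul_comm]
    simp [Matrix.trace, Matrix.diag, Matrix.mul_apply, Matrix.single,
      Matrix.of_apply, ite_and, Finset.sum_ite_eq, Finset.sum_ite_eq']
  -- entries of Y
  have hYentry : ∀ p q : Fin 2 × Fin d,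
      Y p q = Matrix.single (ι q.1) (ι p.1) (1 : ℂ) p.2 q.2 := by
    intro p q
    have key : (D (∑ j, (M j * Matrix.single (ι q.1) (ι p.1) (1 : ℂ)).trace • σ j))
        = Matrix.single (ι q.1) (ι p.1) (1 : ℂ) := hinv _
    have hS : (∑ j, (M j * Matrix.single (ι q.1) (ι p.1) (1 : ℂ)).trace • σ j)
        = ∑ j, ((M j) (ι p.1) (ι q.1)) • σ j :=
      Finset.sum_congr rfl fun j _ => by rw [htr]
    rw [hS] at key
    -- linearity of D on this combination
    have hDlin : D (∑ j, ((M j) (ι p.1) (ι q.1)) • σ j)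
        = ∑ j, ((M j) (ι p.1) (ι q.1)) • D (σ j) := by
      rw [hKraus]
      have : ∀ n : Fin mK, K n * (∑ j, ((M j) (ι p.1) (ι q.1)) • σ j) * (K n)ᴴ
          = ∑ j, ((M j) (ι p.1) (ι q.1)) • (K n * σ j * (K n)ᴴ) := by
        intro n
        rw [Finset.mul_sum, Finset.sum_mul]
        exact Finset.sum_congr rfl fun j _ => by
          rw [mul_smul_comm, smul_mul_assoc]
      rw [Finset.sum_congr rfl fun n _ => this n, Finset.sum_comm]
      exact Finset.sum_congr rfl fun j _ => by rw [← Finset.smul_sum, hKraus]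
    rw [← key, hDlin, hY2]
    simp [Matrix.sum_apply, Matrix.smul_apply, Matrix.kroneckerMap_apply,
      Matrix.submatrix_apply, smul_eq_mul]
  -- the witness vector
  set a : Fin 2 × Fin d := (0, ι 1) with hadef
  set b : Fin 2 × Fin d := (1, ι 0) with hbdef
  set v : (Fin 2 × Fin d) → ℂ := Pi.single a 1 - Pi.single b 1 with hvdef
  have hpos := hYpsd.dotProduct_mulVec_nonneg v
  have hne01 : ι 0 ≠ ι 1 := hι.ne (by decide)
  have hne10 : ι 1 ≠ ι 0 := hι.ne (by decide)
  have hYaa : Y a a = 0 := by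
    rw [hYentry]
    simp [hadef, Matrix.single, hne01, hne10]
  have hYbb : Y b b = 0 := by
    rw [hYentry]
    simp [hbdef, Matrix.single, hne01, hne10]
  have hYab : Y a b = 1 := by
    rw [hYentry]
    simp [hadef, hbdef, Matrix.single]
  have hYba : Y b a = 1 := by
    rw [hYentry]
    simp [hadef, hbdef, Matrix.single]
  have hstarv : star v = v := by
    funext p
    simp only [hvdef, Pi.star_apply, Pi.sub_apply, star_sub, Pi.single_apply]
    split_ifs <;> simp
  have hval : dotProduct (star v) (Y.mulVec v) = -2 := by
    rw [hstarv, hvdef]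
    rw [Matrix.mulVec_sub, Matrix.mulVec_single_one, Matrix.mulVec_single_one]
    rw [sub_dotProduct, single_dotProduct, single_dotProduct]
    simp only [Pi.sub_apply, mul_one, one_mul, Matrix.col_apply]
    rw [hYaa, hYbb, hYab, hYba]
    ring
  rw [hval] at hpos
  have := hpos.1
  norm_num at this
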